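/- arXiv:2211.03194 — 4 statements merged into one kernel-verified Lean document; each statement's English description precedes it below -/
import Mathlib

section
/- Assume that for every h ∈ Λ(Q) and p ∈ 𝒫 the function Ψ_p(h,·) : [t₀,t_f] → ℝ is continuous. Take S := Λ(Q), and for each i ∈ I and p ∈ 𝒫_i let A_p(h) be the set of ALL triples (q,γ,Δ) with q ∈ 𝒫_i, γ ∈ L²₊([t₀,t_f]), Δ ∈ ℝ such that γ ≤ h_p a.e., the support of γ(·−Δ) is contained in [t₀,t_f] up to a null set, and h_q(t) + γ(t−Δ) ≤ B_q for a.e. t ∈ [t₀,t_f]. Then a flow h* ∈ S is a side-constrained dynamic equilibrium w.r.t. S and (A_p) if and only if h* is a dynamic equilibrium with fixed flow volumes and departure time choice. -/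
open MeasureTheory Filter Set

noncomputable section

/-- The restriction of the Lebesgue measure to the planning horizon `[t₀, t_f]`. -/
def horizonMeasure (t0 tf : ℝ) : Measure ℝ := volume.restrict (Icc t0 tf)

/-- `f` is (a representative of) a nonnegative square-integrable function on `[t₀, t_f]`,
i.e. an element of `L²₊([t₀,t_f])`. -/
def L2nonneg (t0 tf : ℝ) (f : ℝ → ℝ) : Prop :=
  MemLp f 2 (horizonMeasure t0 tf) ∧ 0 ≤ᵐ[horizonMeasure t0 tf] f

/-- A walk inflow: a vector of nonnegative L² functions on the horizon, one per walk. -/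
def WalkInflow {P : Type*} (t0 tf : ℝ) (h : P → ℝ → ℝ) : Prop := ∀ p, L2nonneg t0 tf (h p)

variable {I P E : Type*}

/-- The (finite) set of walks belonging to commodity `i`. -/
def commWalks [Fintype P] [DecidableEq I] (comm : P → I) (i : I) : Finset P :=
  Finset.univ.filter fun p => comm p = i

/-- The set `Λ(Q)` of feasible walk inflows for fixed flow volumes `Q` with
inflow bounds `B`. -/
def LambdaQ [Fintype P] [DecidableEq I] (t0 tf : ℝ) (comm : P → I) (B : P → ℝ)
    (Q : I → ℝ) : Set (P → ℝ → ℝ) :=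
  {h | WalkInflow t0 tf h ∧
    (∀ i, ∑ p ∈ commWalks comm i, ∫ t, h p t ∂(horizonMeasure t0 tf) = Q i) ∧
    ∀ p, ∀ᵐ t ∂(horizonMeasure t0 tf), h p t ≤ B p}

/-- The set `Λ(r)` of feasible walk inflows for fixed network inflow rates `r`. -/
def LambdaR [Fintype P] [DecidableEq I] (t0 tf : ℝ) (comm : P → I)
    (r : I → ℝ → ℝ) : Set (P → ℝ → ℝ) :=
  {h | WalkInflow t0 tf h ∧
    ∀ i, ∀ᵐ t ∂(horizonMeasure t0 tf), ∑ p ∈ commWalks comm i, h p t = r i t}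

/-- The canonical scalar product `⟨f,g⟩ = Σ_p ∫ f_p(t) g_p(t) dt` on `L²([t₀,t_f])^𝒫`. -/
def inner2 [Fintype P] (t0 tf : ℝ) (f g : P → ℝ → ℝ) : ℝ :=
  ∑ p : P, ∫ t, f p t * g p t ∂(horizonMeasure t0 tf)

/-- Weak convergence of a sequence of walk inflows. -/
def WeakConvTo [Fintype P] (t0 tf : ℝ) (hn : ℕ → P → ℝ → ℝ) (h : P → ℝ → ℝ) : Prop :=
  ∀ g : P → ℝ → ℝ, (∀ p, MemLp (g p) 2 (horizonMeasure t0 tf)) →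
    Tendsto (fun n => inner2 t0 tf (hn n) g) atTop (nhds (inner2 t0 tf h g))

/-- Convergence in `L²`-norm on the horizon. -/
def L2Tendsto (t0 tf : ℝ) (fn : ℕ → ℝ → ℝ) (f : ℝ → ℝ) : Prop :=
  Tendsto (fun n => eLpNorm (fun t => fn n t - f t) 2 (horizonMeasure t0 tf)) atTop (nhds 0)

/-- Dynamic equilibrium with fixed inflow rates. -/
def IsDEFixedRates [Fintype P] [DecidableEq I] (t0 tf : ℝ) (comm : P → I) (r : I → ℝ → ℝ)
    (Psi : (P → ℝ → ℝ) → P → ℝ → ℝ) (h : P → ℝ → ℝ) : Prop :=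
  h ∈ LambdaR t0 tf comm r ∧
    ∀ p q, comm p = comm q →
      ∀ᵐ t ∂(horizonMeasure t0 tf), 0 < h p t → Psi h p t ≤ Psi h q t

/-- Dynamic equilibrium with fixed flow volumes and departure time choice. -/
def IsDEFixedVolume [Fintype P] [DecidableEq I] (t0 tf : ℝ) (comm : P → I) (B : P → ℝ)
    (Q : I → ℝ) (Psi : (P → ℝ → ℝ) → P → ℝ → ℝ) (h : P → ℝ → ℝ) : Prop :=
  h ∈ LambdaQ t0 tf comm B Q ∧
    ∀ i, ∃ ν : ℝ, ∀ p, comm p = i →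
      ∀ᵐ t ∂(horizonMeasure t0 tf),
        (0 < h p t → Psi h p t ≤ ν) ∧ (h p t < B p → ν ≤ Psi h p t)

/-- Dynamic equilibrium with elastic demands and departure time choice. -/
def IsDEElastic [Fintype P] [DecidableEq I] (t0 tf : ℝ) (comm : P → I) (B : P → ℝ)
    (Q : I → ℝ) (Psi : (P → ℝ → ℝ) → P → ℝ → ℝ) (Θ : I → ℝ → ℝ)
    (h : P → ℝ → ℝ) (Qstar : I → ℝ) : Prop :=
  (∀ i, 0 ≤ Qstar i ∧ Qstar i ≤ Q i) ∧
  h ∈ LambdaQ t0 tf comm B Qstar ∧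
  ∀ i, ∃ ν : ℝ,
    (∀ p, comm p = i → ∀ᵐ t ∂(horizonMeasure t0 tf),
      (0 < h p t → Psi h p t ≤ ν) ∧ (h p t < B p → ν ≤ Psi h p t)) ∧
    (Qstar i < Q i → ν = Θ i (Qstar i)) ∧
    (Qstar i = Q i → ν ≤ Θ i (Q i))

/-- The effective walk-delay operator of the extended (fixed-volume) instance obtained from an
elastic-demand instance: on original walks it is `Ψ`, on the new walk `p̃ᵢ` it is
`Θᵢ` of the total volume of commodity `i` on its original walks. -/
def PsiExt [Fintype P] [DecidableEq I] (t0 tf : ℝ) (comm : P → I)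
    (Psi : (P → ℝ → ℝ) → P → ℝ → ℝ) (Θ : I → ℝ → ℝ) :
    (P ⊕ I → ℝ → ℝ) → P ⊕ I → ℝ → ℝ := fun h' w t =>
  match w with
  | Sum.inl p => Psi (fun q => h' (Sum.inl q)) p t
  | Sum.inr i =>
      Θ i (∑ p ∈ commWalks comm i, ∫ s, h' (Sum.inl p) s ∂(horizonMeasure t0 tf))

/-! ## Side-constrained equilibria -/

/-- The basic requirements on an admissible γ-deviation `(q,γ,Δ)` from walk `p` at inflow `h`:
`q` belongs to the same commodity as `p`, `γ ∈ L²₊([t₀,t_f])`, `γ ≤ h_p` a.e.,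
`h_q(t) + γ(t−Δ) ≤ B_q` a.e., and the support of `γ(·−Δ)` is contained in `[t₀,t_f]`
up to a null set. -/
def ValidTriple (t0 tf : ℝ) (comm : P → I) (B : P → ℝ) (h : P → ℝ → ℝ)
    (p q : P) (γ : ℝ → ℝ) (Δ : ℝ) : Prop :=
  comm q = comm p ∧ L2nonneg t0 tf γ ∧
  (∀ᵐ t ∂(horizonMeasure t0 tf), γ t ≤ h p t) ∧
  (∀ᵐ t ∂(horizonMeasure t0 tf), h q t + γ (t - Δ) ≤ B q) ∧
  (∀ᵐ t ∂(volume : Measure ℝ), γ (t - Δ) ≠ 0 → t ∈ Icc t0 tf)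

/-- The set `U_p(h,t)` of admissible deviations `(q,Δ)` for walk `p` at time `t` under the
inflow `h`, given the correspondence `A` of admissible γ-deviations. -/
def UDev (t0 tf : ℝ) (A : (P → ℝ → ℝ) → P → Set (P × (ℝ → ℝ) × ℝ))
    (h : P → ℝ → ℝ) (p : P) (t : ℝ) : Set (P × ℝ) :=
  {qd | ∀ δ > (0:ℝ), ∀ ε > (0:ℝ), ∃ γ : ℝ → ℝ,
    L2nonneg t0 tf γ ∧
    0 < ∫ s, γ s ∂(horizonMeasure t0 tf) ∧
    (∀ᵐ s ∂(horizonMeasure t0 tf), γ s ≤ ε) ∧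
    (∀ᵐ s ∂(horizonMeasure t0 tf), γ s ≠ 0 → s ∈ Icc (t - δ) (t + δ)) ∧
    (qd.1, γ, qd.2) ∈ A h p}

/-- Side-constrained dynamic equilibrium (SCDE) w.r.t. the effective walk-delay operator
`Psi` (valued in a preorder, e.g. `ℝ` or `ℝ ∪ {∞}`), the constraint set `S` and the
correspondences `A` of admissible γ-deviations. -/
def IsSCDE {α : Type*} [Preorder α] (t0 tf : ℝ)
    (Psi : (P → ℝ → ℝ) → P → ℝ → α) (S : Set (P → ℝ → ℝ))
    (A : (P → ℝ → ℝ) → P → Set (P × (ℝ → ℝ) × ℝ)) (h : P → ℝ → ℝ) : Prop :=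
  h ∈ S ∧ ∀ p, ∀ t ∈ Icc t0 tf, ∀ q Δ, (q, Δ) ∈ UDev t0 tf A h p t →
    Psi h p t ≤ Psi h q (t + Δ)

/-- The walk inflow `H_{p→q}(h,γ,Δ)` obtained from `h` by the γ-deviation `(q,γ,Δ)`
from walk `p`. -/
def Hshift [DecidableEq P] (h : P → ℝ → ℝ) (p q : P) (γ : ℝ → ℝ) (Δ : ℝ) :
    P → ℝ → ℝ := fun w t =>
  h w t + (if w = q then γ (t - Δ) else 0) - (if w = p then γ t else 0)

/-- The set `M(h)` of all walk inflows reachable from `h` by a single admissible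
γ-deviation. -/
def MSet [DecidableEq P] (A : (P → ℝ → ℝ) → P → Set (P × (ℝ → ℝ) × ℝ))
    (h : P → ℝ → ℝ) : Set (P → ℝ → ℝ) :=
  {h' | ∃ p q γ Δ, (q, γ, Δ) ∈ A h p ∧ h' = Hshift h p q γ Δ}

/-- The tangent cone `T(A_p,h)` at `h` w.r.t. the correspondences `A`. -/
def TangentCone [Fintype P] [DecidableEq P] (t0 tf : ℝ)
    (A : (P → ℝ → ℝ) → P → Set (P × (ℝ → ℝ) × ℝ)) (h : P → ℝ → ℝ) :
    Set (P → ℝ → ℝ) :=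
  {v | (∀ p, MemLp (v p) 2 (horizonMeasure t0 tf)) ∧
    ∃ (hn : ℕ → P → ℝ → ℝ) (tn : ℕ → ℝ),
      (∀ n, hn n ∈ MSet A h) ∧ (∀ n, 0 < tn n) ∧
      Tendsto tn atTop (nhds 0) ∧
      ∀ p, Tendsto
        (fun n => eLpNorm (fun t => (hn n p t - h p t) / tn n - v p t) 2
          (horizonMeasure t0 tf)) atTop (nhds 0)}

/-- The correspondences `A` are closed under rate-reduction at `h`. -/
def ClosedRateReduction (A : (P → ℝ → ℝ) → P → Set (P × (ℝ → ℝ) × ℝ))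
    (h : P → ℝ → ℝ) : Prop :=
  ∀ p q γ Δ, (q, γ, Δ) ∈ A h p → ∀ lam ∈ Icc (0:ℝ) 1,
    (q, fun t => lam * γ t, Δ) ∈ A h p

/-- The correspondences `A` are closed under time-restriction at `h`. -/
def ClosedTimeRestriction (A : (P → ℝ → ℝ) → P → Set (P × (ℝ → ℝ) × ℝ))
    (h : P → ℝ → ℝ) : Prop :=
  ∀ p q γ Δ, (q, γ, Δ) ∈ A h p → ∀ J : Set ℝ, MeasurableSet J →
    (q, J.indicator γ, Δ) ∈ A h p

/-- `S` is closed with respect to elementary directions (w.r.t. the correspondences `A`). -/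
def ClosedElemDir (t0 tf : ℝ) (comm : P → I) (S : Set (P → ℝ → ℝ))
    (A : (P → ℝ → ℝ) → P → Set (P × (ℝ → ℝ) × ℝ)) : Prop :=
  ∀ h ∈ S, ∀ h' ∈ S, ∀ p q, comm p = comm q →
    ∀ J : Set ℝ, J ⊆ Icc t0 tf → MeasurableSet J → 0 < volume J →
      (∀ t ∈ J, h' p t < h p t ∧ h q t < h' q t) →
      ∃ t ∈ J, (q, (0:ℝ)) ∈ UDev t0 tf A h p t

/-! ## Edge-load constraints and network loading -/

/-- The edge-load feasibility set `S = {h ∈ Λ(Q) : f_e(h,θ) ≤ c_e(θ) for all e and θ ≥ 0}`. -/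
def SEdge [Fintype P] [DecidableEq I] (t0 tf : ℝ) (comm : P → I) (B : P → ℝ) (Q : I → ℝ)
    (f : (P → ℝ → ℝ) → E → ℝ → ℝ) (c : E → ℝ → ℝ) : Set (P → ℝ → ℝ) :=
  {h | h ∈ LambdaQ t0 tf comm B Q ∧ ∀ e θ, 0 ≤ θ → f h e θ ≤ c e θ}

/-- Strong LP-deviations: admissible γ-deviations whose alternative walk is strictly
unsaturated at every entrance time. -/
def AsLP (t0 tf : ℝ) (comm : P → I) (B : P → ℝ)
    (len : P → ℕ) (edgeOf : P → ℕ → E)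
    (τ : (P → ℝ → ℝ) → P → ℕ → ℝ → ℝ)
    (f : (P → ℝ → ℝ) → E → ℝ → ℝ) (c : E → ℝ → ℝ)
    (h : P → ℝ → ℝ) (p : P) : Set (P × (ℝ → ℝ) × ℝ) :=
  {d | ValidTriple t0 tf comm B h p d.1 d.2.1 d.2.2 ∧
    ∃ γ₀ : ℝ → ℝ, γ₀ =ᵐ[horizonMeasure t0 tf] d.2.1 ∧ (∀ s, s ∉ Icc t0 tf → γ₀ s = 0) ∧
      ∀ t, γ₀ (t - d.2.2) ≠ 0 → ∀ j, 1 ≤ j → j ≤ len d.1 →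
        f h (edgeOf d.1 j) (τ h d.1 j t) < c (edgeOf d.1 j) (τ h d.1 j t)}

/-- Weak LP-deviations: admissible γ-deviations whose alternative walk is strictly
unsaturated during the whole traversal of each of its edges. -/
def AwLP (t0 tf : ℝ) (comm : P → I) (B : P → ℝ)
    (len : P → ℕ) (edgeOf : P → ℕ → E)
    (τ : (P → ℝ → ℝ) → P → ℕ → ℝ → ℝ)
    (f : (P → ℝ → ℝ) → E → ℝ → ℝ) (c : E → ℝ → ℝ)
    (h : P → ℝ → ℝ) (p : P) : Set (P × (ℝ → ℝ) × ℝ) :=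
  {d | ValidTriple t0 tf comm B h p d.1 d.2.1 d.2.2 ∧
    ∃ γ₀ : ℝ → ℝ, γ₀ =ᵐ[horizonMeasure t0 tf] d.2.1 ∧ (∀ s, s ∉ Icc t0 tf → γ₀ s = 0) ∧
      ∀ t, γ₀ (t - d.2.2) ≠ 0 → ∀ j, 1 ≤ j → j ≤ len d.1 →
        ∀ θ ∈ Icc (τ h d.1 j t) (τ h d.1 (j+1) t),
          f h (edgeOf d.1 j) θ < c (edgeOf d.1 j) θ}

/-- Strong MNS-deviations: strong LP-deviations together with deviations without time
shift whose alternative walk is strictly unsaturated (at entrance times) outside a common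
prefix with the original walk. -/
def AsMNS (t0 tf : ℝ) (comm : P → I) (B : P → ℝ)
    (len : P → ℕ) (edgeOf : P → ℕ → E)
    (τ : (P → ℝ → ℝ) → P → ℕ → ℝ → ℝ)
    (f : (P → ℝ → ℝ) → E → ℝ → ℝ) (c : E → ℝ → ℝ)
    (h : P → ℝ → ℝ) (p : P) : Set (P × (ℝ → ℝ) × ℝ) :=
  AsLP t0 tf comm B len edgeOf τ f c h p ∪
  {d | d.2.2 = 0 ∧ ValidTriple t0 tf comm B h p d.1 d.2.1 d.2.2 ∧
    ∃ k, k ≤ len p ∧ k ≤ len d.1 ∧ (∀ j, 1 ≤ j → j ≤ k → edgeOf p j = edgeOf d.1 j) ∧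
      ∃ γ₀ : ℝ → ℝ, γ₀ =ᵐ[horizonMeasure t0 tf] d.2.1 ∧ (∀ s, s ∉ Icc t0 tf → γ₀ s = 0) ∧
        ∀ t, γ₀ t ≠ 0 → ∀ j, k < j → j ≤ len d.1 →
          f h (edgeOf d.1 j) (τ h d.1 j t) < c (edgeOf d.1 j) (τ h d.1 j t)}

/-- Weak MNS-deviations: weak LP-deviations together with deviations without time shift
whose alternative walk is strictly unsaturated (during edge traversal) outside a common
prefix with the original walk. -/
def AwMNS (t0 tf : ℝ) (comm : P → I) (B : P → ℝ)
    (len : P → ℕ) (edgeOf : P → ℕ → E)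
    (τ : (P → ℝ → ℝ) → P → ℕ → ℝ → ℝ)
    (f : (P → ℝ → ℝ) → E → ℝ → ℝ) (c : E → ℝ → ℝ)
    (h : P → ℝ → ℝ) (p : P) : Set (P × (ℝ → ℝ) × ℝ) :=
  AwLP t0 tf comm B len edgeOf τ f c h p ∪
  {d | d.2.2 = 0 ∧ ValidTriple t0 tf comm B h p d.1 d.2.1 d.2.2 ∧
    ∃ k, k ≤ len p ∧ k ≤ len d.1 ∧ (∀ j, 1 ≤ j → j ≤ k → edgeOf p j = edgeOf d.1 j) ∧
      ∃ γ₀ : ℝ → ℝ, γ₀ =ᵐ[horizonMeasure t0 tf] d.2.1 ∧ (∀ s, s ∉ Icc t0 tf → γ₀ s = 0) ∧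
        ∀ t, γ₀ t ≠ 0 → ∀ j, k < j → j ≤ len d.1 →
          ∀ θ ∈ Icc (τ h d.1 j t) (τ h d.1 (j+1) t),
            f h (edgeOf d.1 j) θ < c (edgeOf d.1 j) θ}


lemma exists_local_pos (μ : Measure ℝ) (A : Set ℝ) (hA : μ A ≠ 0) :
    ∃ t ∈ A, ∀ δ > (0:ℝ), μ (A ∩ Icc (t - δ) (t + δ)) ≠ 0 := by
  by_contra hcon
  push_neg at hcon
  apply hA
  have cover : A ⊆ ⋃ r : ℚ × ℚ,
      (if μ (A ∩ Ioo (r.1 : ℝ) (r.2 : ℝ)) = 0 then A ∩ Ioo (r.1 : ℝ) (r.2 : ℝ) else ∅) := by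
    intro t ht
    obtain ⟨δ, hδ, h0⟩ := hcon t ht
    obtain ⟨a, ha1, ha2⟩ := exists_rat_btwn (show t - δ < t by linarith)
    obtain ⟨b, hb1, hb2⟩ := exists_rat_btwn (show t < t + δ by linarith)
    have hsub : A ∩ Ioo (a : ℝ) (b : ℝ) ⊆ A ∩ Icc (t - δ) (t + δ) := by
      rintro x ⟨hx1, hx2⟩
      exact ⟨hx1, le_of_lt (lt_of_lt_of_le ha1 hx2.1.le), le_trans hx2.2.le hb2.le⟩
    have h0' : μ (A ∩ Ioo (a : ℝ) (b : ℝ)) = 0 :=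
      le_antisymm (le_trans (measure_mono hsub) h0.le) (zero_le)
    refine mem_iUnion.mpr ⟨(a, b), ?_⟩
    simp only [h0', if_true]
    exact ⟨ht, ha2, hb1⟩
  refine le_antisymm (le_trans (measure_mono cover) ?_) (zero_le)
  rw [measure_iUnion_null_iff.mpr]
  intro r
  split_ifs with h
  · exact h
  · exact measure_empty

lemma exists_shift_overlap (E F : Set ℝ) (hE : MeasurableSet E) (hF : MeasurableSet F)
    (hEv : volume E ≠ 0) (hFv : volume F ≠ 0) :
    ∃ Δ : ℝ, volume (E ∩ (fun u => u + Δ) ⁻¹' F) ≠ 0 := by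
  by_contra hcon
  push_neg at hcon
  set iE : ℝ → ENNReal := E.indicator (fun _ => 1) with hiE
  set iF : ℝ → ENNReal := F.indicator (fun _ => 1) with hiF
  have hmeasE : Measurable iE := measurable_const.indicator hE
  have hmeasF : Measurable iF := measurable_const.indicator hF
  have key : ∀ Δ : ℝ, ∫⁻ u, iE u * iF (u + Δ) = 0 := by
    intro Δ
    have heq : ∀ u, iE u * iF (u + Δ)
        = (E ∩ (fun u => u + Δ) ⁻¹' F).indicator (fun _ => (1:ENNReal)) u := by
      intro u
      by_cases h1 : u ∈ E <;> by_cases h2 : u + Δ ∈ F <;>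
        simp [hiE, hiF, Set.indicator_apply, h1, h2, Set.mem_preimage]
    simp_rw [heq]
    rw [lintegral_indicator_const (hE.inter ((measurable_add_const Δ) hF)), hcon Δ, mul_zero]
  have hswap : ∫⁻ Δ : ℝ, ∫⁻ u : ℝ, iE u * iF (u + Δ)
      = ∫⁻ u : ℝ, ∫⁻ Δ : ℝ, iE u * iF (u + Δ) := by
    apply lintegral_lintegral_swap
    exact ((hmeasE.comp measurable_snd).mul
      (hmeasF.comp (measurable_snd.add measurable_fst))).aemeasurable
  have hleft : ∫⁻ Δ : ℝ, ∫⁻ u : ℝ, iE u * iF (u + Δ) = 0 := by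
    simp [key]
  have hinner : ∀ u : ℝ, ∫⁻ Δ : ℝ, iE u * iF (u + Δ) = iE u * volume F := by
    intro u
    rw [lintegral_const_mul' _ _ (by
      by_cases h : u ∈ E <;> simp [hiE, Set.indicator_apply, h])]
    congr 1
    have : ∀ Δ : ℝ, iF (u + Δ) = iF (Δ + u) := by intro Δ; rw [add_comm]
    simp_rw [this]
    rw [MeasureTheory.lintegral_add_right_eq_self iF u]
    rw [hiF, lintegral_indicator_const hF, one_mul]
  have hright : ∫⁻ u : ℝ, ∫⁻ Δ : ℝ, iE u * iF (u + Δ) = volume F * volume E := by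
    simp_rw [hinner]
    have : ∀ u : ℝ, iE u * volume F = E.indicator (fun _ => volume F) u := by
      intro u; by_cases h : u ∈ E <;> simp [hiE, Set.indicator_apply, h]
    simp_rw [this]
    exact lintegral_indicator_const hE _
  rw [hswap, hright] at hleft
  exact (mul_ne_zero hFv hEv) hleft
theorem stmt9 {I P : Type*} [Fintype I] [Fintype P] [DecidableEq I]
    (t0 tf : ℝ) (ht0 : 0 ≤ t0) (htf : t0 < tf)
    (comm : P → I) (hcomm : ∀ i, ∃ p, comm p = i)
    (B : P → ℝ) (hB : ∀ p, 0 ≤ B p)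
    (Q : I → ℝ) (hQ : ∀ i, 0 ≤ Q i)
    (Psi : (P → ℝ → ℝ) → P → ℝ → ℝ)
    (hcont : ∀ h ∈ LambdaQ t0 tf comm B Q, ∀ p, ContinuousOn (Psi h p) (Icc t0 tf))
    (hstar : P → ℝ → ℝ) (hmem : hstar ∈ LambdaQ t0 tf comm B Q) :
    IsSCDE t0 tf Psi (LambdaQ t0 tf comm B Q)
        (fun h p => {d | ValidTriple t0 tf comm B h p d.1 d.2.1 d.2.2}) hstar ↔
      IsDEFixedVolume t0 tf comm B Q Psi hstar := by
  classical
  obtain ⟨hmem1, hmem2, hmem3⟩ := hmem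
  have hmem' : hstar ∈ LambdaQ t0 tf comm B Q := ⟨hmem1, hmem2, hmem3⟩
  set μ : Measure ℝ := horizonMeasure t0 tf with hμdef
  have hIccM : MeasurableSet (Icc t0 tf) := measurableSet_Icc
  haveI hfin : IsFiniteMeasure μ := by
    constructor
    rw [hμdef, horizonMeasure, Measure.restrict_apply_univ, Real.volume_Icc]
    exact ENNReal.ofReal_lt_top
  obtain ⟨M, hM⟩ : ∃ M : ℝ, ∀ p, ∀ x ∈ Icc t0 tf, |Psi hstar p x| ≤ M := by
    have hex : ∀ p : P, ∃ C : ℝ, ∀ x ∈ Icc t0 tf, |Psi hstar p x| ≤ C := by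
      intro p
      obtain ⟨C, hC⟩ := isCompact_Icc.exists_bound_of_continuousOn (hcont hstar hmem' p)
      exact ⟨C, fun x hx => by simpa [Real.norm_eq_abs] using hC x hx⟩
    choose C hC using hex
    obtain ⟨M, hMa⟩ := Finite.exists_le C
    exact ⟨M, fun p x hx => le_trans (hC p x hx) (hMa p)⟩
  constructor
  · -- SCDE → DE with fixed volumes
    intro hS
    refine ⟨hmem', ?_⟩
    intro i
    -- measurable representatives of the inflows
    have hrep : ∀ r : P, ∃ H : ℝ → ℝ, Measurable H ∧ hstar r =ᵐ[μ] H := by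
      intro r
      have h := (hmem1 r).1.1.aemeasurable
      exact ⟨h.mk _, h.measurable_mk, h.ae_eq_mk⟩
    choose H hHm hHe using hrep
    have hopen : ∀ (r : P) (O : Set ℝ), IsOpen O →
        MeasurableSet ((Psi hstar r) ⁻¹' O ∩ Icc t0 tf) := by
      intro r O hO
      obtain ⟨U, hU, hUeq⟩ := continuousOn_iff'.mp (hcont hstar hmem' r) O hO
      rw [hUeq]
      exact hU.measurableSet.inter hIccM
    have hvolμ : ∀ S : Set ℝ, MeasurableSet S → S ⊆ Icc t0 tf → volume S = μ S := by
      intro S hSm hSsub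
      rw [hμdef, horizonMeasure, Measure.restrict_apply hSm,
        inter_eq_self_of_subset_left hSsub]
    -- key claim: active high-delay set and unsaturated low-delay set cannot both
    -- have positive measure
    have key : ∀ p q : P, comm p = comm q → ∀ c : ℝ,
        μ {u | 0 < hstar p u ∧ c < Psi hstar p u} ≠ 0 →
        μ {v | hstar q v < B q ∧ Psi hstar q v < c} ≠ 0 → False := by
      intro p q hpq c hEne hFne
      set Ep : ℕ → Set ℝ := fun n =>
        {u | 1/((n:ℝ)+1) ≤ H p u} ∩ (Psi hstar p ⁻¹' Ioi c ∩ Icc t0 tf) with hEpdef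
      have hEpm : ∀ n, MeasurableSet (Ep n) :=
        fun n => ((hHm p) measurableSet_Ici).inter (hopen p _ isOpen_Ioi)
      have hEpsub : {u | 0 < hstar p u ∧ c < Psi hstar p u} ≤ᶠ[ae μ] ⋃ n, Ep n := by
        filter_upwards [hHe p, ae_restrict_mem hIccM] with u h1 h2
        intro hu
        obtain ⟨n, hn⟩ := exists_nat_one_div_lt (h1 ▸ hu.1)
        exact mem_iUnion.mpr ⟨n, hn.le, hu.2, h2⟩
      obtain ⟨n₁, hn₁⟩ : ∃ n, μ (Ep n) ≠ 0 := by
        by_contra hc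
        push_neg at hc
        exact hEne (le_antisymm (le_trans (measure_mono_ae hEpsub)
          (measure_iUnion_null_iff.mpr hc).le) (zero_le))
      set Fq : ℕ → Set ℝ := fun m =>
        {v | H q v ≤ B q - 1/((m:ℝ)+1)} ∩ (Psi hstar q ⁻¹' Iio c ∩ Icc t0 tf) with hFqdef
      have hFqm : ∀ m, MeasurableSet (Fq m) :=
        fun m => ((hHm q) measurableSet_Iic).inter (hopen q _ isOpen_Iio)
      have hFqsub : {v | hstar q v < B q ∧ Psi hstar q v < c} ≤ᶠ[ae μ] ⋃ m, Fq m := by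
        filter_upwards [hHe q, ae_restrict_mem hIccM] with v h1 h2
        intro hv
        obtain ⟨m, hm⟩ := exists_nat_one_div_lt (sub_pos.mpr hv.1)
        refine mem_iUnion.mpr ⟨m, ?_, hv.2, h2⟩
        show H q v ≤ B q - 1/((m:ℝ)+1)
        rw [← h1]
        linarith
      obtain ⟨m₁, hm₁⟩ : ∃ m, μ (Fq m) ≠ 0 := by
        by_contra hc
        push_neg at hc
        exact hFne (le_antisymm (le_trans (measure_mono_ae hFqsub)
          (measure_iUnion_null_iff.mpr hc).le) (zero_le))
      set a : ℝ := min (1/((n₁:ℝ)+1)) (1/((m₁:ℝ)+1)) with hadef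
      have ha : 0 < a := lt_min (by positivity) (by positivity)
      have hEsub : Ep n₁ ⊆ Icc t0 tf := fun u hu => hu.2.2
      have hFsub : Fq m₁ ⊆ Icc t0 tf := fun u hu => hu.2.2
      obtain ⟨Δ, hΔ⟩ := exists_shift_overlap (Ep n₁) (Fq m₁) (hEpm n₁) (hFqm m₁)
        (by rw [hvolμ _ (hEpm n₁) hEsub]; exact hn₁)
        (by rw [hvolμ _ (hFqm m₁) hFsub]; exact hm₁)
      set G : Set ℝ := Ep n₁ ∩ (fun u => u + Δ) ⁻¹' Fq m₁ with hGdef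
      have hGm : MeasurableSet G := (hEpm n₁).inter ((measurable_add_const Δ) (hFqm m₁))
      have hGsub : G ⊆ Icc t0 tf := fun u hu => hEsub hu.1
      have hGne : μ G ≠ 0 := by rw [← hvolμ _ hGm hGsub]; exact hΔ
      obtain ⟨t, htG, hloc⟩ := exists_local_pos μ G hGne
      have htE : t ∈ Ep n₁ := htG.1
      have htF : t + Δ ∈ Fq m₁ := htG.2
      have htIcc : t ∈ Icc t0 tf := htE.2.2
      have htΨ : c < Psi hstar p t := htE.2.1
      have htΔΨ : Psi hstar q (t + Δ) < c := htF.2.1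
      -- (q, Δ) is an admissible deviation at t
      have hUmem : (q, Δ) ∈ UDev t0 tf
          (fun h p => {d | ValidTriple t0 tf comm B h p d.1 d.2.1 d.2.2}) hstar p t := by
        simp only [UDev, Set.mem_setOf_eq]
        intro δ hδ ε hε
        set S : Set ℝ := G ∩ Icc (t - δ) (t + δ) with hSdef
        have hSm : MeasurableSet S := hGm.inter measurableSet_Icc
        have hSne : μ S ≠ 0 := hloc δ hδ
        have hminpos : 0 < min ε a := lt_min hε ha
        have hnn : ∀ u : ℝ, 0 ≤ S.indicator (fun _ => min ε a) u :=
          Set.indicator_nonneg (fun _ _ => hminpos.le)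
        have hL2 : L2nonneg t0 tf (S.indicator (fun _ => min ε a)) := by
          constructor
          · exact memLp_indicator_const 2 hSm _ (Or.inr (measure_ne_top μ S))
          · exact Filter.Eventually.of_forall hnn
        refine ⟨S.indicator (fun _ => min ε a), hL2, ?_, ?_, ?_, ?_⟩
        · rw [integral_indicator_const _ hSm, smul_eq_mul]
          exact mul_pos (ENNReal.toReal_pos hSne (measure_ne_top μ S)) hminpos
        · refine Filter.Eventually.of_forall fun u => ?_
          by_cases hu : u ∈ S
          · rw [Set.indicator_of_mem hu]; exact min_le_left _ _
          · rw [Set.indicator_of_notMem hu]; exact hε.le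
        · refine Filter.Eventually.of_forall fun u hu => ?_
          by_cases h : u ∈ S
          · exact h.2
          · exact absurd (Set.indicator_of_notMem h _) hu
        · refine ⟨hpq.symm, hL2, ?_, ?_, ?_⟩
          · -- γ ≤ hstar p a.e.
            filter_upwards [hHe p, (hmem1 p).2] with u h1 h2
            by_cases hu : u ∈ S
            · have h3 : 1/((n₁:ℝ)+1) ≤ H p u := hu.1.1.1
              have h4 : a ≤ 1/((n₁:ℝ)+1) := min_le_left _ _
              have h5 : min ε a ≤ a := min_le_right _ _
              rw [Set.indicator_of_mem hu]
              rw [h1]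
              linarith
            · rw [Set.indicator_of_notMem hu]
              simpa using h2
          · -- capacity a.e.
            filter_upwards [hHe q, hmem3 q] with v h1 h2
            by_cases hv : v - Δ ∈ S
            · have hvF : (v - Δ) + Δ ∈ Fq m₁ := hv.1.2
              rw [sub_add_cancel] at hvF
              have hb : H q v ≤ B q - 1/((m₁:ℝ)+1) := hvF.1
              have h4 : a ≤ 1/((m₁:ℝ)+1) := min_le_right _ _
              have h5 : min ε a ≤ a := min_le_right _ _
              rw [Set.indicator_of_mem hv, h1]
              linarith
            · rw [Set.indicator_of_notMem hv, add_zero]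
              exact h2
          · -- shifted support inside the horizon
            refine Filter.Eventually.of_forall fun v hv => ?_
            have hvS : v - Δ ∈ S := by
              by_contra h
              exact hv (Set.indicator_of_notMem h _)
            have hvF : (v - Δ) + Δ ∈ Fq m₁ := hvS.1.2
            rw [sub_add_cancel] at hvF
            exact hFsub hvF
      have := hS.2 p t htIcc q Δ hUmem
      linarith
    -- construct the commodity threshold ν
    by_cases hall : ∀ p, comm p = i → μ {u | 0 < hstar p u} = 0
    · refine ⟨-M, ?_⟩
      intro p hpi
      filter_upwards [measure_eq_zero_iff_ae_notMem.mp (hall p hpi),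
        ae_restrict_mem hIccM] with u hu1 hu2
      constructor
      · intro h0
        exact absurd h0 hu1
      · intro _
        exact (abs_le.mp (hM p u hu2)).1
    · push_neg at hall
      obtain ⟨p₀, hp₀i, hp₀⟩ := hall
      set C : Set ℝ :=
        {c | ∀ p, comm p = i → μ {u | 0 < hstar p u ∧ c < Psi hstar p u} = 0} with hCdef
      have hMC : M ∈ C := by
        intro p hpi
        rw [measure_eq_zero_iff_ae_notMem]
        filter_upwards [ae_restrict_mem hIccM] with u hu
        rintro ⟨-, hlt⟩
        exact absurd hlt (not_lt.mpr (abs_le.mp (hM p u hu)).2)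
      have hCne : C.Nonempty := ⟨M, hMC⟩
      have hlb : ∀ c ∈ C, -M ≤ c := by
        intro c hc
        by_contra hlt
        push_neg at hlt
        apply hp₀
        have hsub : {u | 0 < hstar p₀ u} ≤ᶠ[ae μ]
            {u | 0 < hstar p₀ u ∧ c < Psi hstar p₀ u} := by
          filter_upwards [ae_restrict_mem hIccM] with u hu
          intro h0
          exact ⟨h0, lt_of_lt_of_le hlt (abs_le.mp (hM p₀ u hu)).1⟩
        exact le_antisymm (le_trans (measure_mono_ae hsub) (hc p₀ hp₀i).le) (zero_le)
      have hCbdd : BddBelow C := ⟨-M, hlb⟩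
      set ν : ℝ := sInf C with hνdef
      refine ⟨ν, ?_⟩
      intro p hpi
      have Z1 : μ {u | 0 < hstar p u ∧ ν < Psi hstar p u} = 0 := by
        have hset : {u | 0 < hstar p u ∧ ν < Psi hstar p u}
            = ⋃ n : ℕ, {u | 0 < hstar p u ∧ ν + 1/((n:ℝ)+1) < Psi hstar p u} := by
          ext u
          simp only [mem_setOf_eq, mem_iUnion]
          constructor
          · rintro ⟨h0, hlt⟩
            obtain ⟨n, hn⟩ := exists_nat_one_div_lt (sub_pos.mpr hlt)
            exact ⟨n, h0, by linarith⟩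
          · rintro ⟨n, h0, hlt⟩
            have hpos : (0:ℝ) < 1/((n:ℝ)+1) := by positivity
            exact ⟨h0, by linarith⟩
        rw [hset, measure_iUnion_null_iff]
        intro n
        have hpos : (0:ℝ) < 1/((n:ℝ)+1) := by positivity
        obtain ⟨c, hcC, hclt⟩ := exists_lt_of_csInf_lt hCne
          (show sInf C < ν + 1/((n:ℝ)+1) by rw [← hνdef]; linarith)
        refine measure_mono_null ?_ (hcC p hpi)
        rintro u ⟨h0, hlt⟩
        exact ⟨h0, lt_trans hclt hlt⟩
      have Z2 : μ {u | hstar p u < B p ∧ Psi hstar p u < ν} = 0 := by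
        have hset : {u | hstar p u < B p ∧ Psi hstar p u < ν}
            = ⋃ n : ℕ, {u | hstar p u < B p ∧ Psi hstar p u < ν - 1/((n:ℝ)+1)} := by
          ext u
          simp only [mem_setOf_eq, mem_iUnion]
          constructor
          · rintro ⟨hb, hlt⟩
            obtain ⟨n, hn⟩ := exists_nat_one_div_lt (sub_pos.mpr hlt)
            exact ⟨n, hb, by linarith⟩
          · rintro ⟨n, hb, hlt⟩
            have hpos : (0:ℝ) < 1/((n:ℝ)+1) := by positivity
            exact ⟨hb, by linarith⟩
        rw [hset, measure_iUnion_null_iff]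
        intro n
        by_contra hne
        have hpos : (0:ℝ) < 1/((n:ℝ)+1) := by positivity
        have hcnot : (ν - 1/((n:ℝ)+1)) ∉ C := by
          intro hcC
          have := csInf_le hCbdd hcC
          rw [← hνdef] at this
          linarith
        rw [hCdef] at hcnot
        simp only [mem_setOf_eq, not_forall] at hcnot
        obtain ⟨p', hp'i, hp'⟩ := hcnot
        exact key p' p (hp'i.trans hpi.symm) (ν - 1/((n:ℝ)+1)) hp' hne
      filter_upwards [measure_eq_zero_iff_ae_notMem.mp Z1,
        measure_eq_zero_iff_ae_notMem.mp Z2] with u h1 h2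
      constructor
      · intro h0
        by_contra hc
        exact h1 ⟨h0, not_le.mp hc⟩
      · intro hb
        by_contra hc
        exact h2 ⟨hb, not_le.mp hc⟩
  · -- DE with fixed volumes → SCDE
    intro hDE
    refine ⟨hmem', ?_⟩
    intro p t ht q Δ hU
    simp only [UDev, Set.mem_setOf_eq] at hU
    obtain ⟨ν, hν⟩ := hDE.2 (comm p)
    have hcq : comm q = comm p := by
      obtain ⟨γ, -, -, -, -, hvt⟩ := hU 1 one_pos 1 one_pos
      exact hvt.1
    have hup : ∀ δ : ℝ, 0 < δ →
        ∃ u, u ∈ Icc t0 tf ∧ u ∈ Icc (t - δ) (t + δ) ∧ Psi hstar p u ≤ ν := by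
      intro δ hδ
      obtain ⟨γ, ⟨hγmem, hγ0⟩, hint, hγε, hγsupp, hvt⟩ := hU δ hδ 1 one_pos
      by_contra hcon
      push_neg at hcon
      have hzero : γ =ᵐ[μ] 0 := by
        filter_upwards [hvt.2.2.1, hγsupp, hγ0, hν p rfl, ae_restrict_mem hIccM]
          with u h1 h2 h3 h4 h5
        by_contra hne
        have h3' : (0:ℝ) ≤ γ u := h3
        have hpos : 0 < γ u := lt_of_le_of_ne h3' (Ne.symm hne)
        exact absurd (h4.1 (lt_of_lt_of_le hpos h1))
          (not_le.mpr (hcon u h5 (h2 hne)))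
      rw [integral_eq_zero_of_ae hzero] at hint
      exact lt_irrefl 0 hint
    have hvp : ∀ δ : ℝ, 0 < δ →
        ∃ v, v ∈ Icc t0 tf ∧ v ∈ Icc (t + Δ - δ) (t + Δ + δ) ∧ ν ≤ Psi hstar q v := by
      intro δ hδ
      obtain ⟨γ, ⟨hγmem, hγ0⟩, hint, hγε, hγsupp, hvt⟩ := hU δ hδ 1 one_pos
      obtain ⟨hcq', hγL2, hγle, hγcap, hγs2⟩ := hvt
      set S : Set ℝ := Icc t0 tf ∩ Icc (t - δ) (t + δ) with hSdef
      have hSm : MeasurableSet S := hIccM.inter measurableSet_Icc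
      set γ' : ℝ → ℝ := S.indicator γ with hγ'def
      have he1 : γ =ᵐ[μ] γ' := by
        filter_upwards [hγsupp, ae_restrict_mem hIccM] with u h1 h2
        by_cases hne : γ u = 0
        · by_cases hu : u ∈ S
          · rw [hγ'def, Set.indicator_of_mem hu]
          · rw [hγ'def, Set.indicator_of_notMem hu, hne]
        · have hu : u ∈ S := ⟨h2, h1 hne⟩
          rw [hγ'def, Set.indicator_of_mem hu]
      have hrr : μ.restrict S = (volume : Measure ℝ).restrict S := by
        rw [hμdef, horizonMeasure, Measure.restrict_restrict hSm,
          inter_eq_self_of_subset_left inter_subset_left]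
      have he2 : ∫ u, γ' u ∂(volume : Measure ℝ) = ∫ u, γ u ∂μ := by
        rw [hγ'def, integral_indicator hSm, ← hrr, integral_congr_ae he1, hγ'def,
          integral_indicator hSm]
      have he3 : ∫ v, γ' (v - Δ) ∂(volume : Measure ℝ)
          = ∫ u, γ' u ∂(volume : Measure ℝ) := by
        simp_rw [sub_eq_add_neg]
        exact integral_add_right_eq_self γ' (-Δ)
      have hγ0vol : ∀ᵐ u ∂(volume : Measure ℝ), 0 ≤ γ' u := by
        have h0' : ∀ᵐ u ∂(volume : Measure ℝ), u ∈ Icc t0 tf → (0:ℝ) ≤ γ u :=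
          ae_imp_of_ae_restrict hγ0
        filter_upwards [h0'] with u h1
        by_cases hu : u ∈ S
        · rw [hγ'def, Set.indicator_of_mem hu]; exact h1 hu.1
        · rw [hγ'def, Set.indicator_of_notMem hu]
      have hshift0 : ∀ᵐ v ∂(volume : Measure ℝ), 0 ≤ γ' (v - Δ) := by
        have h := (measurePreserving_add_right (volume : Measure ℝ)
          (-Δ)).quasiMeasurePreserving.ae hγ0vol
        simpa [sub_eq_add_neg] using h
      by_contra hcon
      push_neg at hcon
      have hcap' : ∀ᵐ v ∂(volume : Measure ℝ),
          v ∈ Icc t0 tf → hstar q v + γ (v - Δ) ≤ B q := ae_imp_of_ae_restrict hγcap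
      have hνq : ∀ᵐ v ∂(volume : Measure ℝ), v ∈ Icc t0 tf →
          ((0 < hstar q v → Psi hstar q v ≤ ν) ∧
            (hstar q v < B q → ν ≤ Psi hstar q v)) :=
        ae_imp_of_ae_restrict (hν q hcq)
      have hzero : (fun v => γ' (v - Δ)) =ᵐ[(volume : Measure ℝ)] 0 := by
        filter_upwards [hshift0, hγs2, hcap', hνq] with v h0 h1 h2 h3
        by_contra hne
        have hmemS : v - Δ ∈ S := by
          by_contra hnm
          exact hne (by rw [hγ'def]; exact Set.indicator_of_notMem hnm γ)
        have hγval : γ' (v - Δ) = γ (v - Δ) := by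
          rw [hγ'def]; exact Set.indicator_of_mem hmemS γ
        have hγne : γ (v - Δ) ≠ 0 := by rw [← hγval]; exact hne
        have hvIcc : v ∈ Icc t0 tf := h1 hγne
        have hγpos : 0 < γ (v - Δ) := by
          rw [← hγval]
          exact lt_of_le_of_ne h0 (fun hcontra => hne hcontra.symm)
        have hlt : hstar q v < B q := by
          have := h2 hvIcc
          linarith
        have hge : ν ≤ Psi hstar q v := (h3 hvIcc).2 hlt
        have hnear1 : t - δ ≤ v - Δ := hmemS.2.1
        have hnear2 : v - Δ ≤ t + δ := hmemS.2.2
        have hvnear : v ∈ Icc (t + Δ - δ) (t + Δ + δ) :=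
          ⟨by linarith, by linarith⟩
        exact absurd hge (not_le.mpr (hcon v hvIcc hvnear))
      have hz2 : ∫ v, γ' (v - Δ) ∂(volume : Measure ℝ) = 0 :=
        integral_eq_zero_of_ae hzero
      rw [he3, he2] at hz2
      rw [hz2] at hint
      exact lt_irrefl 0 hint
    -- pass to the limit δ → 0 using continuity
    have hδpos : ∀ n : ℕ, (0:ℝ) < 1/((n:ℝ)+1) := fun n => by positivity
    set u : ℕ → ℝ := fun n => Classical.choose (hup (1/((n:ℝ)+1)) (hδpos n)) with hudef
    have huspec : ∀ n : ℕ, u n ∈ Icc t0 tf ∧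
        u n ∈ Icc (t - 1/((n:ℝ)+1)) (t + 1/((n:ℝ)+1)) ∧ Psi hstar p (u n) ≤ ν :=
      fun n => Classical.choose_spec (hup (1/((n:ℝ)+1)) (hδpos n))
    set v : ℕ → ℝ := fun n => Classical.choose (hvp (1/((n:ℝ)+1)) (hδpos n)) with hvdef
    have hvspec : ∀ n : ℕ, v n ∈ Icc t0 tf ∧
        v n ∈ Icc (t + Δ - 1/((n:ℝ)+1)) (t + Δ + 1/((n:ℝ)+1)) ∧ ν ≤ Psi hstar q (v n) :=
      fun n => Classical.choose_spec (hvp (1/((n:ℝ)+1)) (hδpos n))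
    have hbase : Tendsto (fun n : ℕ => 1/((n:ℝ)+1)) atTop (nhds 0) :=
      tendsto_one_div_add_atTop_nhds_zero_nat
    have hut : Tendsto u atTop (nhds t) := by
      refine tendsto_of_tendsto_of_tendsto_of_le_of_le (f := u)
        (g := fun n : ℕ => t - 1/((n:ℝ)+1)) (h := fun n : ℕ => t + 1/((n:ℝ)+1))
        ?_ ?_ (fun n => (huspec n).2.1.1) (fun n => (huspec n).2.1.2)
      · simpa using (tendsto_const_nhds (x := t) (f := atTop)).sub hbase
      · simpa using (tendsto_const_nhds (x := t) (f := atTop)).add hbase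
    have hvt2 : Tendsto v atTop (nhds (t + Δ)) := by
      refine tendsto_of_tendsto_of_tendsto_of_le_of_le (f := v)
        (g := fun n : ℕ => t + Δ - 1/((n:ℝ)+1)) (h := fun n : ℕ => t + Δ + 1/((n:ℝ)+1))
        ?_ ?_ (fun n => (hvspec n).2.1.1) (fun n => (hvspec n).2.1.2)
      · simpa using (tendsto_const_nhds (x := t + Δ) (f := atTop)).sub hbase
      · simpa using (tendsto_const_nhds (x := t + Δ) (f := atTop)).add hbase
    have htΔ : t + Δ ∈ Icc t0 tf :=
      isClosed_Icc.mem_of_tendsto hvt2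
        (Filter.Eventually.of_forall fun n => (hvspec n).1)
    have hΨu : Tendsto (fun n => Psi hstar p (u n)) atTop (nhds (Psi hstar p t)) :=
      Tendsto.comp (hcont hstar hmem' p t ht)
        (tendsto_nhdsWithin_iff.mpr
          ⟨hut, Filter.Eventually.of_forall fun n => (huspec n).1⟩)
    have hΨv : Tendsto (fun n => Psi hstar q (v n)) atTop
        (nhds (Psi hstar q (t + Δ))) :=
      Tendsto.comp (hcont hstar hmem' q (t + Δ) htΔ)
        (tendsto_nhdsWithin_iff.mpr
          ⟨hvt2, Filter.Eventually.of_forall fun n => (hvspec n).1⟩)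
    have hle1 : Psi hstar p t ≤ ν :=
      le_of_tendsto hΨu (Filter.Eventually.of_forall fun n => (huspec n).2.2)
    have hle2 : ν ≤ Psi hstar q (t + Δ) :=
      ge_of_tendsto hΨv (Filter.Eventually.of_forall fun n => (hvspec n).2.2)
    exact le_trans hle1 hle2
end
end

section
/- Assume that for every h ∈ Λ(r) and p ∈ 𝒫 the function Ψ_p(h,·) : [t₀,t_f] → ℝ is continuous. Take S := Λ(r), and for each i ∈ I and p ∈ 𝒫_i let A_p(h) := {(q,γ,0) : q ∈ 𝒫_i, γ ∈ L²₊([t₀,t_f]), γ ≤ h_p a.e.}. Then a flow h* ∈ S is a side-constrained dynamic equilibrium w.r.t. S and (A_p) if and only if h* is a dynamic equilibrium with fixed inflow rates. -/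
open MeasureTheory Filter Set

noncomputable section

variable {I P E : Type*}

/-- Almost every point of a set `F` has the property that all its neighborhoods
intersect `F` in positive measure. -/
lemma ae_local_pos_aux (μ : Measure ℝ) (F : Set ℝ) :
    ∀ᵐ t ∂μ, t ∈ F → ∀ δ > (0:ℝ), μ (F ∩ Icc (t - δ) (t + δ)) ≠ 0 := by
  set D := {t | t ∈ F ∧ ∃ δ > (0:ℝ), μ (F ∩ Icc (t - δ) (t + δ)) = 0} with hDdef
  have hD : μ D = 0 := by
    have hsub : D ⊆ ⋃ ab : ℚ × ℚ,
        {t | (t ∈ F ∩ Icc (ab.1 : ℝ) (ab.2 : ℝ)) ∧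
          μ (F ∩ Icc (ab.1 : ℝ) (ab.2 : ℝ)) = 0} := by
      rintro t ⟨htF, δ, hδ, h0⟩
      obtain ⟨a, ha1, ha2⟩ := exists_rat_btwn (show t - δ < t by linarith)
      obtain ⟨b, hb1, hb2⟩ := exists_rat_btwn (show t < t + δ by linarith)
      refine mem_iUnion.mpr ⟨(a, b), ⟨⟨htF, ha2.le, hb1.le⟩, ?_⟩⟩
      exact measure_mono_null
        (inter_subset_inter_right _ (Icc_subset_Icc ha1.le hb2.le)) h0
    refine measure_mono_null hsub (measure_iUnion_null fun ab => ?_)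
    by_cases h : μ (F ∩ Icc (ab.1 : ℝ) (ab.2 : ℝ)) = 0
    · exact measure_mono_null (fun t ht => ht.1) h
    · exact measure_mono_null (fun t ht => absurd ht.2 h) measure_empty
  have := measure_eq_zero_iff_ae_notMem.mp hD
  filter_upwards [this] with t ht htF δ hδ h0
  exact ht ⟨htF, δ, hδ, h0⟩

theorem stmt10 {I P : Type*} [Fintype I] [Fintype P] [DecidableEq I]
    (t0 tf : ℝ) (ht0 : 0 ≤ t0) (htf : t0 < tf)
    (comm : P → I) (hcomm : ∀ i, ∃ p, comm p = i)
    (r : I → ℝ → ℝ) (hr : ∀ i, L2nonneg t0 tf (r i))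
    (Psi : (P → ℝ → ℝ) → P → ℝ → ℝ)
    (hcont : ∀ h ∈ LambdaR t0 tf comm r, ∀ p, ContinuousOn (Psi h p) (Icc t0 tf))
    (hstar : P → ℝ → ℝ) (hmem : hstar ∈ LambdaR t0 tf comm r) :
    IsSCDE t0 tf Psi (LambdaR t0 tf comm r)
        (fun h p => {d | comm d.1 = comm p ∧ d.2.2 = 0 ∧ L2nonneg t0 tf d.2.1 ∧
          ∀ᵐ t ∂(horizonMeasure t0 tf), d.2.1 t ≤ h p t}) hstar ↔
      IsDEFixedRates t0 tf comm r Psi hstar := by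
  haveI : IsFiniteMeasure (horizonMeasure t0 tf) := by
    constructor
    rw [horizonMeasure, Measure.restrict_apply_univ]
    exact measure_Icc_lt_top
  have hmes : ∀ᵐ t ∂(horizonMeasure t0 tf), t ∈ Icc t0 tf :=
    ae_restrict_mem measurableSet_Icc
  have hp2 : ∀ p, MemLp (hstar p) 2 (horizonMeasure t0 tf) := fun p => (hmem.1 p).1
  have hp0 : ∀ p, 0 ≤ᵐ[horizonMeasure t0 tf] hstar p := fun p => (hmem.1 p).2
  constructor
  · rintro ⟨hS, hsc⟩
    refine ⟨hmem, fun p q hpq => ?_⟩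
    have hloc := ae_local_pos_aux (horizonMeasure t0 tf) {t | 0 < hstar p t}
    filter_upwards [hmes, hloc] with t ht hlt hpos
    have hU : (q, (0:ℝ)) ∈ UDev t0 tf
        (fun h p => {d | comm d.1 = comm p ∧ d.2.2 = 0 ∧ L2nonneg t0 tf d.2.1 ∧
          ∀ᵐ s ∂(horizonMeasure t0 tf), d.2.1 s ≤ h p s}) hstar p t := by
      intro δ hδ ε hε
      set γ : ℝ → ℝ := (Icc (t - δ) (t + δ)).indicator (fun s => min ε (hstar p s))
        with hγdef
      have hmeas : AEStronglyMeasurable γ (horizonMeasure t0 tf) := by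
        refine AEStronglyMeasurable.indicator ?_ measurableSet_Icc
        exact (continuous_const.min continuous_id).comp_aestronglyMeasurable
          (hp2 p).aestronglyMeasurable
      have hγmem : MemLp γ 2 (horizonMeasure t0 tf) := by
        refine MemLp.of_le (memLp_const ε) hmeas ?_
        filter_upwards [hp0 p] with s hs
        by_cases hsmem : s ∈ Icc (t - δ) (t + δ)
        · simp only [hγdef, Set.indicator_of_mem hsmem, Real.norm_eq_abs]
          rw [abs_of_nonneg (le_min hε.le hs), abs_of_nonneg hε.le]
          exact min_le_left _ _
        · simp only [hγdef, Set.indicator_of_notMem hsmem, Real.norm_eq_abs, abs_zero]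
          exact abs_nonneg ε
      have hγ0 : 0 ≤ᵐ[horizonMeasure t0 tf] γ := by
        filter_upwards [hp0 p] with s hs
        by_cases hsmem : s ∈ Icc (t - δ) (t + δ)
        · simp only [hγdef, Set.indicator_of_mem hsmem]
          exact le_min hε.le hs
        · simp [hγdef, Set.indicator_of_notMem hsmem]
      have hγleh : ∀ᵐ s ∂(horizonMeasure t0 tf), γ s ≤ hstar p s := by
        filter_upwards [hp0 p] with s hs
        by_cases hsmem : s ∈ Icc (t - δ) (t + δ)
        · simp only [hγdef, Set.indicator_of_mem hsmem]
          exact min_le_right _ _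
        · simpa [hγdef, Set.indicator_of_notMem hsmem] using hs
      refine ⟨γ, ⟨hγmem, hγ0⟩, ?_, ?_, ?_, ?_⟩
      · -- positive integral
        have hint : Integrable γ (horizonMeasure t0 tf) :=
          hγmem.integrable (by norm_num)
        rw [integral_pos_iff_support_of_nonneg_ae hγ0 hint]
        refine lt_of_lt_of_le
          (b := (horizonMeasure t0 tf) ({s | 0 < hstar p s} ∩ Icc (t - δ) (t + δ)))
          ?_ (measure_mono ?_)
        · exact pos_iff_ne_zero.mpr (hlt hpos δ hδ)
        · intro s hs
          have hsmem : s ∈ Icc (t - δ) (t + δ) := hs.2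
          have hspos : 0 < hstar p s := hs.1
          simp only [Function.mem_support, hγdef, Set.indicator_of_mem hsmem]
          exact ne_of_gt (lt_min hε hspos)
      · filter_upwards with s
        by_cases hsmem : s ∈ Icc (t - δ) (t + δ)
        · simp only [hγdef, Set.indicator_of_mem hsmem]
          exact min_le_left _ _
        · simp [hγdef, Set.indicator_of_notMem hsmem, hε.le]
      · filter_upwards with s hs
        by_contra hsmem
        exact hs (Set.indicator_of_notMem hsmem _)
      · exact ⟨hpq.symm, rfl, ⟨hγmem, hγ0⟩, hγleh⟩
    have := hsc p t ht q 0 hU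
    simpa using this
  · rintro ⟨hmemR, hde⟩
    refine ⟨hmem, fun p t ht q Δ hU => ?_⟩
    obtain ⟨γ1, _, _, _, _, hA1⟩ := hU 1 one_pos 1 one_pos
    obtain ⟨hcq, hΔ, -, -⟩ := hA1
    have hΔ0 : Δ = 0 := hΔ
    subst hΔ0
    rw [add_zero]
    have key : ∀ n : ℕ, ∃ s, s ∈ Icc t0 tf ∧ |s - t| ≤ 1 / ((n : ℝ) + 1) ∧
        Psi hstar p s ≤ Psi hstar q s := by
      intro n
      obtain ⟨γ, hγL2, hγint, hγε, hγsupp, hAmem⟩ :=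
        hU (1 / ((n : ℝ) + 1)) (by positivity) 1 one_pos
      obtain ⟨-, -, -, hγle⟩ := hAmem
      have hde' := hde p q hcq.symm
      have hne : ¬ (∀ᵐ s ∂(horizonMeasure t0 tf), γ s = 0) := by
        intro hz
        have : ∫ s, γ s ∂(horizonMeasure t0 tf) = 0 := by
          rw [integral_congr_ae hz]; simp
        linarith
      have hfreq : ∃ᵐ s ∂(horizonMeasure t0 tf), γ s ≠ 0 := by
        exact Filter.not_eventually.mp hne
      have hbig := hfreq.and_eventually
        (((hγL2.2.and hγle).and (hγsupp.and hde')).and hmes)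
      obtain ⟨s, hsne, ⟨⟨hs0, hsle⟩, hssupp, hsde⟩, hsIcc⟩ := hbig.exists
      have hspos : 0 < γ s := lt_of_le_of_ne hs0 (Ne.symm hsne)
      have hsmem := hssupp hsne
      refine ⟨s, hsIcc, ?_, hsde (lt_of_lt_of_le hspos hsle)⟩
      rw [abs_le]
      constructor
      · have := hsmem.1; linarith
      · have := hsmem.2; linarith
    choose s hsIcc hsclose hsle using key
    have hst : Tendsto s atTop (nhds t) := by
      rw [tendsto_iff_dist_tendsto_zero]
      refine squeeze_zero (fun n => dist_nonneg) (fun n => ?_)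
        tendsto_one_div_add_atTop_nhds_zero_nat
      rw [Real.dist_eq]
      exact hsclose n
    have hstW : Tendsto s atTop (nhdsWithin t (Icc t0 tf)) :=
      tendsto_nhdsWithin_iff.mpr ⟨hst, Eventually.of_forall hsIcc⟩
    have hPsip : Tendsto (fun n => Psi hstar p (s n)) atTop (nhds (Psi hstar p t)) :=
      (hcont hstar hmem p t ht).tendsto.comp hstW
    have hPsiq : Tendsto (fun n => Psi hstar q (s n)) atTop (nhds (Psi hstar q t)) :=
      (hcont hstar hmem q t ht).tendsto.comp hstW
    exact le_of_tendsto_of_tendsto' hPsip hPsiq hsle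

end
end

section
/- Let S ⊆ Λ(r) be a constraint set with fixed inflow rates and (A_p) admissible γ-deviations such that S is closed with respect to elementary directions, and assume Ψ_p(h,·) ∈ L²([t₀,t_f]) for every h ∈ S and p ∈ 𝒫. Then every side-constrained dynamic equilibrium h* ∈ S w.r.t. S and (A_p) is a solution of the variational inequality VI(Ψ,S), i.e. ⟨Ψ(h*), h − h*⟩ ≥ 0 for all h ∈ S. -/
open MeasureTheory Filter Set

noncomputable section

variable {I P E : Type*}

/-- From an a.e. property, extract a measurable conull set on which it holds. -/
lemma exists_measurable_conull {α : Type*} [MeasurableSpace α] (μ : Measure α)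
    (q : α → Prop) (hq : ∀ᵐ t ∂μ, q t) :
    ∃ E, MeasurableSet E ∧ μ Eᶜ = 0 ∧ ∀ t ∈ E, q t := by
  refine ⟨(toMeasurable μ {t | ¬ q t})ᶜ, (measurableSet_toMeasurable _ _).compl, ?_, ?_⟩
  · rw [compl_compl, measure_toMeasurable]
    exact ae_iff.mp hq
  · intro t ht
    by_contra hqt
    exact ht (subset_toMeasurable _ _ hqt)

/-- If a finite family sums to zero but its weighted sum is negative, there is a pair
`(p,q)` with `a p < 0 < a q` and `c q < c p`. -/
lemma exists_pair_of_sum_lt {P : Type*} (F : Finset P) (a c : P → ℝ)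
    (hsum : ∑ p ∈ F, a p = 0) (hneg : ∑ p ∈ F, c p * a p < 0) :
    ∃ p ∈ F, ∃ q ∈ F, a p < 0 ∧ 0 < a q ∧ c q < c p := by
  classical
  by_contra hcon
  push_neg at hcon
  have hne : (F.filter fun p => a p < 0).Nonempty := by
    by_contra hno
    rw [Finset.not_nonempty_iff_eq_empty, Finset.filter_eq_empty_iff] at hno
    have hz : ∀ p ∈ F, a p = 0 :=
      (Finset.sum_eq_zero_iff_of_nonneg (fun p hp => not_lt.mp (hno hp))).1 hsum
    have : ∑ p ∈ F, c p * a p = 0 :=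
      Finset.sum_eq_zero fun p hp => by rw [hz p hp, mul_zero]
    linarith
  obtain ⟨p1, hp1mem, hmax⟩ := Finset.exists_max_image _ c hne
  rw [Finset.mem_filter] at hp1mem
  have hbound : ∀ p ∈ F, c p1 * a p ≤ c p * a p := by
    intro p hp
    rcases lt_trichotomy (a p) 0 with hlt | heq | hgt
    · have := hmax p (Finset.mem_filter.mpr ⟨hp, hlt⟩)
      nlinarith
    · rw [heq]; simp
    · have := hcon p1 hp1mem.1 p hp hp1mem.2 hgt
      nlinarith
  have h0 : (0:ℝ) ≤ ∑ p ∈ F, c p * a p := by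
    calc (0:ℝ) = c p1 * ∑ p ∈ F, a p := by rw [hsum, mul_zero]
    _ = ∑ p ∈ F, c p1 * a p := Finset.mul_sum _ _ _
    _ ≤ _ := Finset.sum_le_sum hbound
  linarith

theorem stmt15 {I P : Type*} [Fintype I] [Fintype P] [DecidableEq I]
    (t0 tf : ℝ) (ht0 : 0 ≤ t0) (htf : t0 < tf)
    (comm : P → I) (hcomm : ∀ i, ∃ p, comm p = i)
    (r : I → ℝ → ℝ) (hr : ∀ i, L2nonneg t0 tf (r i))
    (Psi : (P → ℝ → ℝ) → P → ℝ → ℝ)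
    (S : Set (P → ℝ → ℝ)) (hS : S ⊆ LambdaR t0 tf comm r)
    (A : (P → ℝ → ℝ) → P → Set (P × (ℝ → ℝ) × ℝ))
    (hA : ∀ h ∈ S, ∀ p, ∀ d ∈ A h p, comm d.1 = comm p ∧ L2nonneg t0 tf d.2.1 ∧
      ∀ᵐ t ∂(horizonMeasure t0 tf), d.2.1 t ≤ h p t)
    (helem : ClosedElemDir t0 tf comm S A)
    (hL2 : ∀ h ∈ S, ∀ p, MemLp (Psi h p) 2 (horizonMeasure t0 tf))
    (hstar : P → ℝ → ℝ) (hscde : IsSCDE t0 tf Psi S A hstar) :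
    ∀ h ∈ S, 0 ≤ inner2 t0 tf (Psi hstar) (fun p t => h p t - hstar p t) := by
  classical
  intro h hhS
  by_contra hneg
  push_neg at hneg
  set μ := horizonMeasure t0 tf with hμdef
  have hs : hstar ∈ S := hscde.1
  have hhΛ := hS hhS
  have hsΛ := hS hs
  have mh : ∀ p, MemLp (h p) 2 μ := fun p => (hhΛ.1 p).1
  have ms : ∀ p, MemLp (hstar p) 2 μ := fun p => (hsΛ.1 p).1
  have mΨ : ∀ p, MemLp (Psi hstar p) 2 μ := hL2 hstar hs
  have hint : ∀ p, Integrable (fun t => Psi hstar p t * (h p t - hstar p t)) μ := by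
    intro p
    have h2 : MemLp (fun t => h p t - hstar p t) 2 μ := (mh p).sub (ms p)
    have hpqr : (1:ENNReal)/1 = 1/2 + 1/2 := by rw [ENNReal.add_halves]; simp
    have h3 : MemLp (Psi hstar p • fun t => h p t - hstar p t) 1 μ :=
      MemLp.smul (r := 1) h2 (mΨ p)
    exact memLp_one_iff_integrable.mp h3
  set g : ℝ → ℝ := fun t => ∑ p, Psi hstar p t * (h p t - hstar p t) with hgdef
  have hgneg : ∫ t, g t ∂μ < 0 := by
    have : inner2 t0 tf (Psi hstar) (fun p t => h p t - hstar p t) = ∫ t, g t ∂μ := by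
      rw [hgdef, integral_finset_sum _ (fun p _ => hint p)]; rfl
    linarith [this ▸ hneg]
  -- measurable representatives
  have amh : ∀ p, AEStronglyMeasurable (h p) μ := fun p => (mh p).1
  have ams : ∀ p, AEStronglyMeasurable (hstar p) μ := fun p => (ms p).1
  have amΨ : ∀ p, AEStronglyMeasurable (Psi hstar p) μ := fun p => (mΨ p).1
  set H : P → ℝ → ℝ := fun p => (amh p).mk (h p) with hHdef
  set Hs : P → ℝ → ℝ := fun p => (ams p).mk (hstar p) with hHsdef
  set Ps : P → ℝ → ℝ := fun p => (amΨ p).mk (Psi hstar p) with hPsdef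
  have mH : ∀ p, Measurable (H p) := fun p => (amh p).stronglyMeasurable_mk.measurable
  have mHs : ∀ p, Measurable (Hs p) := fun p => (ams p).stronglyMeasurable_mk.measurable
  have mPs : ∀ p, Measurable (Ps p) := fun p => (amΨ p).stronglyMeasurable_mk.measurable
  -- a conull measurable set where everything is nice
  have haeE : ∀ᵐ t ∂μ,
      (∀ p, h p t = H p t ∧ hstar p t = Hs p t ∧ Psi hstar p t = Ps p t) ∧
      ∀ i, ∑ p ∈ commWalks comm i, h p t = r i t ∧
        ∑ p ∈ commWalks comm i, hstar p t = r i t := by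
    refine Filter.Eventually.and ?_ ?_
    · rw [ae_all_iff]
      intro p
      exact ((amh p).ae_eq_mk).and (((ams p).ae_eq_mk).and ((amΨ p).ae_eq_mk))
    · rw [ae_all_iff]
      intro i
      exact (hhΛ.2 i).and (hsΛ.2 i)
  obtain ⟨E, hEm, hEc, hEprop⟩ :
      ∃ E : Set ℝ, MeasurableSet E ∧ μ Eᶜ = 0 ∧ ∀ t ∈ E,
        (∀ p, h p t = H p t ∧ hstar p t = Hs p t ∧ Psi hstar p t = Ps p t) ∧
        ∀ i, ∑ p ∈ commWalks comm i, h p t = r i t ∧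
          ∑ p ∈ commWalks comm i, hstar p t = r i t :=
    exists_measurable_conull μ _ haeE
  -- the bad set has positive measure
  have hBad : μ {t | g t < 0} ≠ 0 := by
    intro h0
    have hge : ∀ᵐ t ∂μ, 0 ≤ g t := by
      rw [ae_iff]
      simpa [not_le] using h0
    exact absurd (integral_nonneg_of_ae hge) (not_le.2 hgneg)
  have hrestr : ∀ X : Set ℝ, μ X = volume (X ∩ Icc t0 tf) :=
    fun X => Measure.restrict_apply' measurableSet_Icc
  have hIccc : μ (Icc t0 tf)ᶜ = 0 := by
    rw [hrestr]
    simp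
  set G : Set ℝ := {t | g t < 0} ∩ Icc t0 tf ∩ E with hGdef
  have hGne : μ G ≠ 0 := by
    intro h0
    apply hBad
    have hsub : {t | g t < 0} ⊆ G ∪ ((Icc t0 tf)ᶜ ∪ Eᶜ) := by
      intro t ht
      by_cases h1 : t ∈ Icc t0 tf
      · by_cases h2 : t ∈ E
        · exact Or.inl ⟨⟨ht, h1⟩, h2⟩
        · exact Or.inr (Or.inr h2)
      · exact Or.inr (Or.inl h1)
    refine le_antisymm ?_ zero_le
    calc μ {t | g t < 0} ≤ μ (G ∪ ((Icc t0 tf)ᶜ ∪ Eᶜ)) := measure_mono hsub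
    _ ≤ μ G + μ ((Icc t0 tf)ᶜ ∪ Eᶜ) := measure_union_le _ _
    _ ≤ μ G + (μ (Icc t0 tf)ᶜ + μ Eᶜ) := by gcongr; exact measure_union_le _ _
    _ = 0 := by rw [h0, hIccc, hEc]; simp
  -- the elementary-direction target sets
  set base : P → P → Set ℝ := fun p q =>
    {t | H p t < Hs p t} ∩ {t | Hs q t < H q t} ∩ {t | Ps q t < Ps p t} ∩
      Icc t0 tf ∩ E with hbasedef
  have hbasem : ∀ p q, MeasurableSet (base p q) := fun p q =>
    ((((measurableSet_lt (mH p) (mHs p)).inter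
        (measurableSet_lt (mHs q) (mH q))).inter
        (measurableSet_lt (mPs q) (mPs p))).inter measurableSet_Icc).inter hEm
  -- every bad time lies in some base set
  have hGsub : G ⊆ ⋃ (p : P), ⋃ (q : P), ⋃ (_ : comm p = comm q), base p q := by
    rintro t ⟨⟨hgt, htIcc⟩, htE⟩
    obtain ⟨heq, hsumr⟩ := hEprop t htE
    -- split the sum by commodity
    have hfib : ∑ i : I, ∑ p ∈ commWalks comm i,
        Psi hstar p t * (h p t - hstar p t) = g t := by
      rw [hgdef]
      exact Finset.sum_fiberwise _ _ _
    have hex : ∃ i ∈ (Finset.univ : Finset I),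
        ∑ p ∈ commWalks comm i, Psi hstar p t * (h p t - hstar p t) < 0 := by
      by_contra hall
      push_neg at hall
      have : (0:ℝ) ≤ ∑ i : I, ∑ p ∈ commWalks comm i,
          Psi hstar p t * (h p t - hstar p t) :=
        Finset.sum_nonneg fun i hi => hall i hi
      rw [hfib] at this
      exact absurd hgt (not_lt.2 this)
    obtain ⟨i, _, hi⟩ := hex
    have hzero : ∑ p ∈ commWalks comm i, (h p t - hstar p t) = 0 := by
      rw [Finset.sum_sub_distrib, (hsumr i).1, (hsumr i).2, sub_self]
    obtain ⟨p, hpF, q, hqF, hap, haq, hcq⟩ :=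
      exists_pair_of_sum_lt (commWalks comm i)
        (fun p => h p t - hstar p t) (fun p => Psi hstar p t) hzero hi
    have hpc : comm p = i := (Finset.mem_filter.mp hpF).2
    have hqc : comm q = i := (Finset.mem_filter.mp hqF).2
    refine mem_iUnion.mpr ⟨p, mem_iUnion.mpr ⟨q, mem_iUnion.mpr ⟨hpc.trans hqc.symm, ?_⟩⟩⟩
    refine ⟨⟨⟨⟨?_, ?_⟩, ?_⟩, htIcc⟩, htE⟩
    · show H p t < Hs p t
      rw [← (heq p).1, ← (heq p).2.1]
      linarith
    · show Hs q t < H q t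
      rw [← (heq q).1, ← (heq q).2.1]
      linarith
    · show Ps q t < Ps p t
      rw [← (heq q).2.2, ← (heq p).2.2]
      exact hcq
  -- some base set has positive measure
  obtain ⟨p, q, hpq, hbne⟩ : ∃ p q, comm p = comm q ∧ μ (base p q) ≠ 0 := by
    by_contra hall
    push_neg at hall
    have : μ (⋃ (p : P), ⋃ (q : P), ⋃ (_ : comm p = comm q), base p q) = 0 :=
      measure_iUnion_null fun p => measure_iUnion_null fun q =>
        measure_iUnion_null fun hpq => hall p q hpq
    exact hGne (measure_mono_null hGsub this)
  have hbsub : base p q ⊆ Icc t0 tf := fun t ht => ht.1.2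
  have hbpos : 0 < volume (base p q) := by
    rw [pos_iff_ne_zero]
    intro h0
    apply hbne
    rw [hrestr, inter_eq_left.mpr hbsub]
    exact h0
  -- apply closedness w.r.t. elementary directions
  obtain ⟨t, htJ, hU⟩ := helem hstar hs h hhS p q hpq (base p q) hbsub
    (hbasem p q) hbpos (by
      intro t ht
      obtain ⟨⟨⟨⟨h1, h2⟩, _⟩, _⟩, htE⟩ := ht
      obtain ⟨heq, _⟩ := hEprop t htE
      constructor
      · rw [(heq p).1, (heq p).2.1]; exact h1
      · rw [(heq q).1, (heq q).2.1]; exact h2)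
  have hle := hscde.2 p t (hbsub htJ) q 0 hU
  rw [add_zero] at hle
  obtain ⟨⟨⟨⟨_, _⟩, h3⟩, _⟩, htE⟩ := htJ
  obtain ⟨heq, _⟩ := hEprop t htE
  rw [(heq p).2.2, (heq q).2.2] at hle
  exact absurd hle (not_le.2 h3)

end
end

section
/- Let z_p : ℝ≥0 → ℝ≥0 be continuous and nondecreasing and v_p : [t₀,t_f] → ℝ≥0 be continuous, for every p ∈ 𝒫, and define S := {h ∈ Λ(r) : z_p(h_p(t)) ≤ v_p(t) for every p ∈ 𝒫 and almost all t ∈ [t₀,t_f]}, with admissible γ-deviations A_p(h) := {(q,γ,Δ) : q ∈ 𝒫_i, γ ∈ L²₊([t₀,t_f]), γ ≤ h_p a.e., H_{p→q}(h,γ,Δ) ∈ S}. Then S is closed with respect to elementary directions. -/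
open MeasureTheory Filter Set

noncomputable section

variable {I P E : Type*}

theorem stmt16 {I P : Type*} [Fintype I] [Fintype P] [DecidableEq I] [DecidableEq P]
    (t0 tf : ℝ) (ht0 : 0 ≤ t0) (htf : t0 < tf)
    (comm : P → I) (hcomm : ∀ i, ∃ p, comm p = i)
    (r : I → ℝ → ℝ) (hr : ∀ i, L2nonneg t0 tf (r i))
    (z : P → ℝ → ℝ)
    (hzc : ∀ p, ContinuousOn (z p) (Ici 0))
    (hzm : ∀ p, MonotoneOn (z p) (Ici 0))
    (hznn : ∀ p, ∀ x ∈ Ici (0:ℝ), 0 ≤ z p x)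
    (v : P → ℝ → ℝ)
    (hvc : ∀ p, ContinuousOn (v p) (Icc t0 tf))
    (hvnn : ∀ p, ∀ t ∈ Icc t0 tf, 0 ≤ v p t) :
    ClosedElemDir t0 tf comm
      {h | h ∈ LambdaR t0 tf comm r ∧
        ∀ p, ∀ᵐ t ∂(horizonMeasure t0 tf), z p (h p t) ≤ v p t}
      (fun h p => {d | comm d.1 = comm p ∧ L2nonneg t0 tf d.2.1 ∧
        (∀ᵐ t ∂(horizonMeasure t0 tf), d.2.1 t ≤ h p t) ∧
        Hshift h p d.1 d.2.1 d.2.2 ∈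
          {h' | h' ∈ LambdaR t0 tf comm r ∧
            ∀ p', ∀ᵐ t ∂(horizonMeasure t0 tf), z p' (h' p' t) ≤ v p' t}}) := by
  classical
  intro h hS h' hS' p q hpq J hJsub hJmeas hJpos hJprop
  set μ := horizonMeasure t0 tf with hμdef
  haveI : IsFiniteMeasure μ := by
    constructor
    rw [hμdef, horizonMeasure, Measure.restrict_apply_univ]
    exact measure_Icc_lt_top
  obtain ⟨t₁, ht₁⟩ : J.Nonempty := nonempty_of_measure_ne_zero hJpos.ne'
  have hpq' : p ≠ q := by
    rintro rfl
    have h1 := (hJprop t₁ ht₁).1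
    have h2 := (hJprop t₁ ht₁).2
    linarith
  obtain ⟨⟨hWI, hSum⟩, hzv⟩ := hS
  obtain ⟨⟨hWI', hSum'⟩, hzv'⟩ := hS'
  -- find a density point of `J` inside `J`
  have hdens := Besicovitch.ae_tendsto_measure_inter_div_of_measurableSet
    (volume : Measure ℝ) hJmeas
  haveI : (ae (volume.restrict J)).NeBot :=
    ae_neBot.2 (fun h0 => hJpos.ne' (Measure.restrict_eq_zero.mp h0))
  obtain ⟨t, hxd, hxJ⟩ :=
    ((ae_restrict_of_ae hdens).and (ae_restrict_mem hJmeas)).exists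
  refine ⟨t, hxJ, ?_⟩
  intro δ hδ ε hε
  -- find a small closed ball around `t` meeting `J` in positive measure
  have hxd1 : Tendsto (fun r => volume (J ∩ Metric.closedBall t r) /
      volume (Metric.closedBall t r)) (nhdsWithin (0:ℝ) (Ioi 0)) (nhds 1) := by
    simpa [indicator_of_mem hxJ] using hxd
  have h1 : ∀ᶠ s in nhdsWithin (0:ℝ) (Ioi 0), (1/2 : ENNReal) <
      volume (J ∩ Metric.closedBall t s) / volume (Metric.closedBall t s) :=
    hxd1.eventually (lt_mem_nhds (by norm_num))
  have h2 : ∀ᶠ s in nhdsWithin (0:ℝ) (Ioi 0), s ∈ Ioo (0:ℝ) δ :=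
    Ioo_mem_nhdsGT_of_mem ⟨le_refl 0, hδ⟩
  obtain ⟨ρ, hρ1, hρ2⟩ := (h1.and h2).exists
  have hcb : volume (J ∩ Metric.closedBall t ρ) ≠ 0 := by
    intro h0
    rw [h0, ENNReal.zero_div] at hρ1
    simp at hρ1
  set K := J ∩ Icc (t - δ) (t + δ) with hKdef
  have hKmeas : MeasurableSet K := hJmeas.inter measurableSet_Icc
  have hKpos : 0 < volume K := by
    refine lt_of_lt_of_le (pos_iff_ne_zero.mpr hcb) (measure_mono ?_)
    refine inter_subset_inter_right J ?_
    rw [Real.closedBall_eq_Icc]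
    exact Icc_subset_Icc (by linarith [hρ2.1, hρ2.2]) (by linarith [hρ2.1, hρ2.2])
  have hKsub : K ⊆ Icc t0 tf := fun s hs => hJsub hs.1
  -- the deviation function
  set g : ℝ → ℝ := fun s => min ε (min (h p s - h' p s) (h' q s - h q s)) with hgdef
  set γ : ℝ → ℝ := K.indicator g with hγdef
  have hγK : ∀ s ∈ K, 0 < γ s ∧ γ s ≤ h p s - h' p s ∧ γ s ≤ h' q s - h q s ∧ γ s ≤ ε := by
    intro s hs
    have h1 := (hJprop s hs.1).1
    have h2 := (hJprop s hs.1).2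
    rw [hγdef, indicator_of_mem hs, hgdef]
    refine ⟨?_, ?_, ?_, min_le_left _ _⟩
    · simp only [lt_min_iff]
      exact ⟨hε, by linarith, by linarith⟩
    · exact le_trans (min_le_right _ _) (min_le_left _ _)
    · exact le_trans (min_le_right _ _) (min_le_right _ _)
  have hγ0 : ∀ s, s ∉ K → γ s = 0 := fun s hs => indicator_of_notMem hs g
  have hγnn : ∀ s, 0 ≤ γ s := by
    intro s
    by_cases hs : s ∈ K
    · exact (hγK s hs).1.le
    · rw [hγ0 s hs]
  have hγε : ∀ s, γ s ≤ ε := by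
    intro s
    by_cases hs : s ∈ K
    · exact (hγK s hs).2.2.2
    · rw [hγ0 s hs]; exact hε.le
  -- measurability and integrability
  have hmp := ((hWI p).1.aestronglyMeasurable).aemeasurable
  have hmp' := ((hWI' p).1.aestronglyMeasurable).aemeasurable
  have hmq := ((hWI q).1.aestronglyMeasurable).aemeasurable
  have hmq' := ((hWI' q).1.aestronglyMeasurable).aemeasurable
  have hgm : AEMeasurable g μ := by
    exact aemeasurable_const.min ((hmp.sub hmp').min (hmq'.sub hmq))
  have hγm : AEMeasurable γ μ := hgm.indicator hKmeas
  have hγmem : MemLp γ 2 μ := by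
    refine MemLp.of_bound hγm.aestronglyMeasurable ε ?_
    refine Eventually.of_forall fun s => ?_
    rw [Real.norm_eq_abs, abs_of_nonneg (hγnn s)]
    exact hγε s
  have hγL2 : L2nonneg t0 tf γ := ⟨hγmem, Eventually.of_forall hγnn⟩
  have hγint : Integrable γ μ := hγmem.integrable (by norm_num)
  have hγpos : 0 < ∫ s, γ s ∂μ := by
    rw [integral_pos_iff_support_of_nonneg_ae (Eventually.of_forall hγnn) hγint]
    have hsub : K ⊆ Function.support γ := fun s hs => (hγK s hs).1.ne'
    refine lt_of_lt_of_le ?_ (measure_mono hsub)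
    rw [hμdef, horizonMeasure, Measure.restrict_apply hKmeas,
      inter_eq_self_of_subset_left hKsub]
    exact hKpos
  -- a.e. facts
  have hae : ∀ᵐ s ∂μ, 0 ≤ h p s ∧ 0 ≤ h' p s ∧ 0 ≤ h q s ∧ 0 ≤ h' q s ∧
      z p (h p s) ≤ v p s ∧ z q (h q s) ≤ v q s ∧ z q (h' q s) ≤ v q s := by
    filter_upwards [(hWI p).2, (hWI' p).2, (hWI q).2, (hWI' q).2, hzv p, hzv q, hzv' q]
      with s a b c d e f g'
    exact ⟨a, b, c, d, e, f, g'⟩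
  have hγlehp : ∀ᵐ s ∂μ, γ s ≤ h p s := by
    filter_upwards [hae] with s hs
    by_cases hsK : s ∈ K
    · have := (hγK s hsK).2.1
      linarith [hs.2.1]
    · rw [hγ0 s hsK]; exact hs.1
  -- pointwise description of the shifted inflow
  have hHp : ∀ s, Hshift h p q γ 0 p s = h p s - γ s := by
    intro s; simp [Hshift, hpq']
  have hHq : ∀ s, Hshift h p q γ 0 q s = h q s + γ s := by
    intro s; simp [Hshift, Ne.symm hpq']
  have hHw : ∀ w, w ≠ p → w ≠ q → ∀ s, Hshift h p q γ 0 w s = h w s := by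
    intro w hwp hwq s; simp [Hshift, hwp, hwq]
  have hHpfun : Hshift h p q γ 0 p = fun s => h p s - γ s := funext hHp
  have hHqfun : Hshift h p q γ 0 q = fun s => h q s + γ s := funext hHq
  -- membership of the shifted inflow in S
  have hHS : Hshift h p q γ 0 ∈
      {h'' | h'' ∈ LambdaR t0 tf comm r ∧
        ∀ p', ∀ᵐ s ∂(horizonMeasure t0 tf), z p' (h'' p' s) ≤ v p' s} := by
    refine ⟨⟨?_, ?_⟩, ?_⟩
    · -- WalkInflow
      intro w
      by_cases hwp : w = p
      · subst hwp
        rw [hHpfun]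
        refine ⟨(hWI w).1.sub hγmem, ?_⟩
        filter_upwards [hγlehp] with s hs
        simpa using hs
      · by_cases hwq : w = q
        · subst hwq
          rw [hHqfun]
          refine ⟨(hWI w).1.add hγmem, ?_⟩
          filter_upwards [(hWI w).2] with s hs
          have := hγnn s
          simp only [Pi.zero_apply] at hs ⊢
          linarith
        · rw [funext (hHw w hwp hwq)]
          exact hWI w
    · -- sum condition
      intro i
      have hmemiff : p ∈ commWalks comm i ↔ q ∈ commWalks comm i := by
        simp [commWalks, hpq]
      filter_upwards [hSum i] with s hs
      have hsum : ∑ w ∈ commWalks comm i, Hshift h p q γ 0 w s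
          = ∑ w ∈ commWalks comm i, h w s := by
        simp only [Hshift, sub_zero]
        rw [Finset.sum_sub_distrib, Finset.sum_add_distrib,
          Finset.sum_ite_eq' (commWalks comm i) q (fun _ => γ s),
          Finset.sum_ite_eq' (commWalks comm i) p (fun _ => γ s)]
        by_cases hc : q ∈ commWalks comm i
        · rw [if_pos hc, if_pos (hmemiff.mpr hc)]; ring
        · rw [if_neg hc, if_neg (fun hp2 => hc (hmemiff.mp hp2))]; ring
      rw [hsum]
      exact hs
    · -- side constraints
      intro p'
      by_cases hwp : p' = p
      · subst hwp
        filter_upwards [hae] with s hs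
        obtain ⟨h1, h2, h3, h4, h5, h6, h7⟩ := hs
        rw [hHp s]
        by_cases hsK : s ∈ K
        · obtain ⟨hpos, hle1, hle2, -⟩ := hγK s hsK
          have h0 : 0 ≤ h p' s - γ s := by linarith
          have hmono := hzm p' (mem_Ici.2 h0) (mem_Ici.2 h1)
            (by linarith [hγnn s] : h p' s - γ s ≤ h p' s)
          linarith
        · rw [hγ0 s hsK]
          simpa using h5
      · by_cases hwq : p' = q
        · subst hwq
          filter_upwards [hae] with s hs
          obtain ⟨h1, h2, h3, h4, h5, h6, h7⟩ := hs
          rw [hHq s]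
          by_cases hsK : s ∈ K
          · obtain ⟨hpos, hle1, hle2, -⟩ := hγK s hsK
            have h0 : 0 ≤ h p' s + γ s := by linarith
            have hmono := hzm p' (mem_Ici.2 h0) (mem_Ici.2 h4)
              (by linarith : h p' s + γ s ≤ h' p' s)
            linarith
          · rw [hγ0 s hsK]
            simpa using h6
        · rw [funext (hHw p' hwp hwq)]
          exact hzv p'
  -- assemble
  refine ⟨γ, hγL2, hγpos, Eventually.of_forall hγε, ?_, ?_⟩
  · refine Eventually.of_forall fun s hsne => ?_
    by_contra hsmem
    exact hsne (hγ0 s (fun hsK => hsmem hsK.2))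
  · exact ⟨hpq.symm, hγL2, hγlehp, hHS⟩

end
end
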